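/- The space of totally real 3-planes 𝕐 = {P ∈ G(3, ℝ⁶) : P ∩ J(P) = {0}} is path-connected, where J is the standard complex structure on ℝ⁶ = ℂ³. -/

import Mathlib

/-- `ℂ³` as a (real) inner product space, identified with `ℝ⁶`. -/
noncomputable abbrev E3 : Type := EuclideanSpace ℂ (Fin 3)

/-- The standard complex structure `J` on `ℝ⁶ = ℂ³`: multiplication by `i`,
viewed as a real-linear map. -/
noncomputable def J : E3 →ₗ[ℝ] E3 := (LinearMap.lsmul ℂ E3 Complex.I).restrictScalars ℝ

/-- The Grassmannian `G(3, ℝ⁶)` of real 3-dimensional subspaces of `ℝ⁶ ≅ ℂ³`. -/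
def Gr3 : Type := {P : Submodule ℝ E3 // Module.finrank ℝ P = 3}

/-- The orthogonal projection onto a subspace, as a point of the space of
real-linear endomorphisms of `ℝ⁶`. -/
noncomputable def projOf (P : Submodule ℝ E3) : E3 →L[ℝ] E3 :=
  P.subtypeL.comp (P.orthogonalProjectionOnto)

/-- The standard topology on the Grassmannian, induced by the embedding sending a
plane to the orthogonal projection onto it. -/
noncomputable instance : TopologicalSpace Gr3 :=
  TopologicalSpace.induced (fun P => projOf P.1) inferInstance

-- auxiliary definitions
noncomputable abbrev ER3 : Type := EuclideanSpace ℝ (Fin 3)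
abbrev M3 : Type := Matrix (Fin 3) (Fin 3) ℂ

noncomputable def colv (A : M3) (i : Fin 3) : E3 :=
  (WithLp.equiv 2 (Fin 3 → ℂ)).symm (fun j => A j i)

noncomputable def colMap (A : M3) : ER3 →L[ℝ] E3 :=
  ∑ i, (EuclideanSpace.proj i : ER3 →L[ℝ] ℝ).smulRight (colv A i)

lemma colMap_apply (A : M3) (x : ER3) : colMap A x = ∑ i, x i • colv A i := by
  simp [colMap, ContinuousLinearMap.sum_apply]

noncomputable def spanA (A : M3) : Submodule ℝ E3 := Submodule.span ℝ (Set.range (colv A))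

lemma mem_spanA {A : M3} {x : E3} :
    x ∈ spanA A ↔ ∃ c : Fin 3 → ℝ, ∑ i, c i • colv A i = x :=
  Submodule.mem_span_range_iff_exists_fun ℝ

open Module in
lemma exists_basis_colv {A : M3} (hA : IsUnit A) :
    ∃ b : Basis (Fin 3) ℂ E3, ∀ i, b i = colv A i := by
  have : Invertible A := hA.invertible
  let e1 : (Fin 3 → ℂ) ≃ₗ[ℂ] (Fin 3 → ℂ) := A.toLinearEquiv' this
  let e2 : (Fin 3 → ℂ) ≃ₗ[ℂ] E3 := (WithLp.linearEquiv 2 ℂ (Fin 3 → ℂ)).symm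
  refine ⟨(Pi.basisFun ℂ (Fin 3)).map (e1.trans e2), fun i => ?_⟩
  ext j
  simp [e1, e2, colv, Matrix.toLinearEquiv', Matrix.mulVec_single, PiLp.toLp_apply,
    Matrix.toLin'_apply]

lemma linearIndependent_colv_C {A : M3} (hA : IsUnit A) : LinearIndependent ℂ (colv A) := by
  obtain ⟨b, hb⟩ := exists_basis_colv hA
  have := b.linearIndependent
  rwa [show ⇑b = colv A from funext hb] at this

lemma linearIndependent_colv_R {A : M3} (hA : IsUnit A) : LinearIndependent ℝ (colv A) :=
  (linearIndependent_colv_C hA).restrict_scalars (by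
    intro a b h
    simpa using congrArg Complex.re h)

lemma finrank_spanA {A : M3} (hA : IsUnit A) : Module.finrank ℝ (spanA A) = 3 := by
  rw [spanA, finrank_span_eq_card (linearIndependent_colv_R hA), Fintype.card_fin]

lemma J_apply (v : E3) : J v = Complex.I • v := rfl

lemma real_smul_eq (r : ℝ) (v : E3) : r • v = (r : ℂ) • v := by
  rw [← algebraMap_smul ℂ r v, Complex.coe_algebraMap]

lemma spanA_inf {A : M3} (hA : IsUnit A) : spanA A ⊓ (spanA A).map J = ⊥ := by
  rw [eq_bot_iff]
  intro x hx
  obtain ⟨hx1, hx2⟩ := Submodule.mem_inf.1 hx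
  obtain ⟨c, hc⟩ := mem_spanA.1 hx1
  obtain ⟨y, hy, hxy⟩ := Submodule.mem_map.1 hx2
  obtain ⟨d, hd⟩ := mem_spanA.1 hy
  have key : ∑ i, ((c i : ℂ) - (d i : ℂ) * Complex.I) • colv A i = 0 := by
    have h1 : ∑ i, (c i : ℂ) • colv A i = x := by
      rw [← hc]; exact Finset.sum_congr rfl fun i _ => by rw [← real_smul_eq]
    have h2 : ∑ i, ((d i : ℂ) * Complex.I) • colv A i = x := by
      rw [← hxy, ← hd, map_sum]
      exact Finset.sum_congr rfl fun i _ => by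
        rw [map_smul, J_apply, real_smul_eq, smul_smul, mul_comm]
    simp only [sub_smul, Finset.sum_sub_distrib, h1, h2, sub_self]
  have hz := Fintype.linearIndependent_iff.1 (linearIndependent_colv_C hA) _ key
  have hc0 : ∀ i, c i = 0 := by
    intro i
    have := congrArg Complex.re (sub_eq_zero.1 (hz i))
    simpa using this
  have : x = 0 := by
    rw [← hc]
    simp [hc0]
  simp [this]

lemma J_injective : Function.Injective J := by
  intro a b h
  have h2 : J (J a) = J (J b) := congrArg J h
  simp only [J_apply, smul_smul, Complex.I_mul_I, neg_smul, one_smul] at h2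
  exact neg_injective h2

lemma exists_unit_spanA {P : Submodule ℝ E3} (h3 : Module.finrank ℝ P = 3)
    (hTR : P ⊓ P.map J = ⊥) : ∃ A : M3, IsUnit A ∧ spanA A = P := by
  have hfd : FiniteDimensional ℝ E3 := by infer_instance
  let b : Module.Basis (Fin 3) ℝ P := Module.finBasisOfFinrankEq ℝ P h3
  let u : Fin 3 → E3 := fun i => (b i : E3)
  have huR : LinearIndependent ℝ u :=
    (b.linearIndependent.map' P.subtype P.ker_subtype)
  have huC : LinearIndependent ℂ u := by
    rw [Fintype.linearIndependent_iff]
    intro g hg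
    -- split into real and imaginary parts
    have hsplit : (∑ i, (g i).re • u i) + Complex.I • (∑ i, (g i).im • u i) = 0 := by
      rw [← hg]
      rw [Finset.smul_sum, ← Finset.sum_add_distrib]
      refine Finset.sum_congr rfl fun i _ => ?_
      rw [real_smul_eq, real_smul_eq, smul_smul, ← add_smul]
      congr 1
      simp [Complex.ext_iff]
    set xr := ∑ i, (g i).re • u i with hxr
    set xi := ∑ i, (g i).im • u i with hxi
    have hxrP : xr ∈ P := Submodule.sum_mem _ fun i _ => Submodule.smul_mem _ _ (b i).2
    have hxiP : xi ∈ P := Submodule.sum_mem _ fun i _ => Submodule.smul_mem _ _ (b i).2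
    have hxr0 : xr ∈ P ⊓ P.map J := by
      refine Submodule.mem_inf.2 ⟨hxrP, ?_⟩
      refine Submodule.mem_map.2 ⟨-xi, neg_mem hxiP, ?_⟩
      rw [map_neg, J_apply]
      exact (eq_neg_of_add_eq_zero_left hsplit).symm
    rw [hTR, Submodule.mem_bot] at hxr0
    have hxi0 : xi = 0 := by
      have : Complex.I • xi = 0 := by
        rw [← hsplit, hxr0, zero_add]
      have := congrArg (fun v => Complex.I • v) this
      simpa [smul_smul, Complex.I_mul_I, neg_smul, one_smul, neg_eq_zero] using this
    have hre := Fintype.linearIndependent_iff.1 huR _ hxr0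
    have him := Fintype.linearIndependent_iff.1 huR _ hxi0
    intro i
    have h1 := hre i
    have h2 := him i
    exact Complex.ext h1 h2
  -- u is a basis of E3 over ℂ
  have hcard : Fintype.card (Fin 3) = Module.finrank ℂ E3 := by
    simp [finrank_euclideanSpace]
  let bC : Module.Basis (Fin 3) ℂ E3 := basisOfLinearIndependentOfCardEqFinrank huC hcard
  have hbC : ∀ i, bC i = u i := fun i =>
    congrFun (coe_basisOfLinearIndependentOfCardEqFinrank huC hcard) i
  -- the matrix of coordinates
  let uFun : Fin 3 → (Fin 3 → ℂ) := fun i => WithLp.equiv 2 (Fin 3 → ℂ) (u i)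
  let e2 : E3 ≃ₗ[ℂ] (Fin 3 → ℂ) := WithLp.linearEquiv 2 ℂ (Fin 3 → ℂ)
  let bC' : Module.Basis (Fin 3) ℂ (Fin 3 → ℂ) := bC.map e2
  let A : M3 := Matrix.of fun j i => u i j
  have hAcol : colv A = u := by
    funext i
    ext j
    simp [colv, A, PiLp.toLp_apply]
  have hAunit : IsUnit A := by
    have : A = (Pi.basisFun ℂ (Fin 3)).toMatrix bC' := by
      ext j i
      rw [Module.Basis.toMatrix_apply, Pi.basisFun_repr]
      simp [bC', e2, hbC, A, uFun]
    rw [this]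
    have := (Pi.basisFun ℂ (Fin 3)).invertibleToMatrix bC'
    exact isUnit_of_invertible _
  refine ⟨A, hAunit, ?_⟩
  rw [spanA, hAcol]
  -- span of range u = P
  have : Submodule.span ℝ (Set.range u) = Submodule.map P.subtype ⊤ := by
    rw [← b.span_eq, Submodule.map_span]
    congr 1
    rw [← Set.range_comp]
    rfl
  rw [this, Submodule.map_subtype_top]

open ContinuousLinearMap in
noncomputable def gram (A : M3) : ER3 →L[ℝ] ER3 :=
  (ContinuousLinearMap.adjoint (colMap A)).comp (colMap A)

lemma colMap_injective {A : M3} (hA : IsUnit A) : Function.Injective (colMap A) := by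
  rw [injective_iff_map_eq_zero]
  intro c hc
  rw [colMap_apply] at hc
  have := Fintype.linearIndependent_iff.1 (linearIndependent_colv_R hA) (fun i => c i) hc
  ext i
  exact this i

lemma isUnit_gram {A : M3} (hA : IsUnit A) : IsUnit (gram A) := by
  have hinj : Function.Injective (gram A) := by
    have h : ∀ x, (gram A) x = 0 → x = 0 := by
      intro x hx
      have h1 : (inner ℝ (colMap A x) (colMap A x) : ℝ) = 0 := by
        rw [← ContinuousLinearMap.adjoint_inner_left]
        change (inner ℝ ((gram A) x) x : ℝ) = 0
        rw [hx, inner_zero_left]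
      exact colMap_injective hA (by rw [map_zero]; exact inner_self_eq_zero.1 h1)
    intro a b hab
    have : gram A (a - b) = 0 := by rw [map_sub, hab, sub_self]
    have := h _ this
    rwa [sub_eq_zero] at this
  have hsurj : Function.Surjective (gram A) :=
    LinearMap.injective_iff_surjective.1 hinj
  let e : ER3 ≃ₗ[ℝ] ER3 := LinearEquiv.ofBijective (gram A : ER3 →ₗ[ℝ] ER3) ⟨hinj, hsurj⟩
  refine ⟨⟨gram A, e.symm.toContinuousLinearEquiv.toContinuousLinearMap, ?_, ?_⟩, rfl⟩
  · refine ContinuousLinearMap.ext fun x => ?_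
    exact e.apply_symm_apply x
  · refine ContinuousLinearMap.ext fun x => ?_
    exact e.symm_apply_apply x

noncomputable def piMat (A : M3) : E3 →L[ℝ] E3 :=
  (colMap A).comp ((Ring.inverse (gram A)).comp (ContinuousLinearMap.adjoint (colMap A)))

lemma range_colMap {A : M3} (x : E3) : x ∈ spanA A ↔ ∃ c : ER3, colMap A c = x := by
  rw [mem_spanA]
  constructor
  · rintro ⟨c, hc⟩
    exact ⟨(WithLp.equiv 2 (Fin 3 → ℝ)).symm c, by rw [colMap_apply]; exact hc⟩
  · rintro ⟨c, hc⟩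
    exact ⟨fun i => c i, by rw [← colMap_apply]; exact hc⟩

lemma projOf_spanA {A : M3} (hA : IsUnit A) : projOf (spanA A) = piMat A := by
  have hgram := isUnit_gram hA
  have hcancel : (gram A).comp (Ring.inverse (gram A)) = 1 := by
    have := Ring.mul_inverse_cancel _ hgram
    exact this
  refine ContinuousLinearMap.ext fun x => ?_
  show (spanA A).starProjection x = piMat A x
  apply Submodule.eq_starProjection_of_mem_of_inner_eq_zero
  · exact (range_colMap _).2 ⟨_, rfl⟩
  · intro w hw
    obtain ⟨c, rfl⟩ := (range_colMap _).1 hw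
    have hBt : (ContinuousLinearMap.adjoint (colMap A)) (x - piMat A x) = 0 := by
      rw [map_sub]
      have : (ContinuousLinearMap.adjoint (colMap A)) (piMat A x) =
          ((gram A).comp (Ring.inverse (gram A)))
            ((ContinuousLinearMap.adjoint (colMap A)) x) := rfl
      rw [this, hcancel]
      simp
    rw [← ContinuousLinearMap.adjoint_inner_left, hBt, inner_zero_left]

lemma continuous_colMap : Continuous colMap := by
  refine continuous_finset_sum _ fun i _ => ?_
  have hcv : Continuous fun A : M3 => colv A i := by
    have : Continuous fun A : M3 => (fun j => A j i : Fin 3 → ℂ) :=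
      continuous_pi fun j => (continuous_apply i).comp (continuous_apply j)
    exact (PiLp.continuous_toLp 2 (fun _ : Fin 3 => ℂ)).comp this
  exact ((ContinuousLinearMap.smulRightL ℝ ER3 E3 (EuclideanSpace.proj i)).continuous).comp hcv

lemma continuous_adjoint_colMap :
    Continuous fun A : M3 => ContinuousLinearMap.adjoint (colMap A) :=
  (ContinuousLinearMap.adjoint : (ER3 →L[ℝ] E3) ≃ₗᵢ⋆[ℝ] (E3 →L[ℝ] ER3)).continuous.comp
    continuous_colMap

lemma continuous_gram : Continuous gram :=
  continuous_adjoint_colMap.clm_comp continuous_colMap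

lemma continuousOn_piMat : ContinuousOn piMat {A : M3 | IsUnit A} := by
  have hinv : ContinuousOn (fun A : M3 => Ring.inverse (gram A)) {A : M3 | IsUnit A} := by
    intro A hA
    have h1 : ContinuousAt Ring.inverse (gram A) := by
      have := NormedRing.inverse_continuousAt (isUnit_gram hA).unit
      rwa [IsUnit.unit_spec] at this
    exact (h1.comp continuous_gram.continuousAt).continuousWithinAt
  exact continuous_colMap.continuousOn.clm_comp
    (hinv.clm_comp continuous_adjoint_colMap.continuousOn)

open Polynomial in
lemma joinedIn_units_one (A : M3) (hA : IsUnit A) :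
    JoinedIn {B : M3 | IsUnit B} 1 A := by
  classical
  set p : Polynomial ℂ :=
    Matrix.det (Matrix.of fun i j => C ((1 : M3) i j) + X * C ((A - 1) i j)) with hp
  have hev : ∀ z : ℂ, p.eval z = Matrix.det (1 + z • (A - 1)) := by
    intro z
    rw [hp, ← coe_evalRingHom, RingHom.map_det]
    congr 1
    ext i j
    simp only [Matrix.one_apply, Matrix.add_apply, Matrix.smul_apply, Matrix.sub_apply,
      RingHom.mapMatrix_apply, Matrix.map_apply, Matrix.of_apply, coe_evalRingHom, eval_add,
      eval_mul, eval_C, eval_X, smul_eq_mul]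
  have hp0 : p ≠ 0 := by
    intro h
    have := hev 0
    rw [h] at this
    simp at this
  have hfin : Set.Finite {z : ℂ | p.IsRoot z} := p.finite_setOf_isRoot hp0
  have hpc : IsPathConnected {z : ℂ | p.IsRoot z}ᶜ :=
    hfin.countable.isPathConnected_compl_of_one_lt_rank
      (by rw [Complex.rank_real_complex]; norm_num)
  have h0 : (0 : ℂ) ∈ {z : ℂ | p.IsRoot z}ᶜ := by
    simp only [Set.mem_compl_iff, Set.mem_setOf_eq, IsRoot]
    rw [hev]
    simp
  have h1 : (1 : ℂ) ∈ {z : ℂ | p.IsRoot z}ᶜ := by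
    simp only [Set.mem_compl_iff, Set.mem_setOf_eq, IsRoot]
    rw [hev]
    simp only [one_smul, add_sub_cancel]
    exact (Matrix.isUnit_iff_isUnit_det A).1 hA |>.ne_zero
  have hj : JoinedIn {z : ℂ | p.IsRoot z}ᶜ 0 1 := hpc.joinedIn _ h0 _ h1
  have hg : Continuous fun z : ℂ => (1 : M3) + z • (A - 1) :=
    continuous_const.add (continuous_id.smul continuous_const)
  have him := hj.map hg
  have hsub : (fun z : ℂ => (1 : M3) + z • (A - 1)) '' {z : ℂ | p.IsRoot z}ᶜ ⊆
      {B : M3 | IsUnit B} := by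
    rintro _ ⟨z, hz, rfl⟩
    simp only [Set.mem_compl_iff, Set.mem_setOf_eq, IsRoot] at hz
    rw [hev] at hz
    exact (Matrix.isUnit_iff_isUnit_det _).2 (isUnit_iff_ne_zero.2 hz)
  have := him.mono hsub
  simpa using this

lemma isPathConnected_units : IsPathConnected {B : M3 | IsUnit B} := by
  rw [isPathConnected_iff]
  refine ⟨⟨1, isUnit_one⟩, fun x hx y hy => ?_⟩
  exact (joinedIn_units_one x hx).symm.trans (joinedIn_units_one y hy)

open scoped Classical in
noncomputable def fGr (A : M3) : Gr3 :=
  if h : IsUnit A then ⟨spanA A, finrank_spanA h⟩ else ⟨spanA 1, finrank_spanA isUnit_one⟩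

lemma fGr_of_unit {A : M3} (hA : IsUnit A) : fGr A = ⟨spanA A, finrank_spanA hA⟩ := by
  rw [fGr]; exact dif_pos hA

lemma image_fGr : fGr '' {B : M3 | IsUnit B} = {P : Gr3 | P.1 ⊓ P.1.map J = ⊥} := by
  ext P
  constructor
  · rintro ⟨A, hA, rfl⟩
    rw [fGr_of_unit hA]
    exact spanA_inf hA
  · intro hP
    obtain ⟨A, hA, hspan⟩ := exists_unit_spanA P.2 hP
    refine ⟨A, hA, ?_⟩
    rw [fGr_of_unit hA]
    exact Subtype.ext hspan

lemma continuousOn_fGr : ContinuousOn fGr {B : M3 | IsUnit B} := by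
  have hind : Topology.IsInducing (fun P : Gr3 => projOf P.1) := ⟨rfl⟩
  rw [hind.continuousOn_iff]
  refine continuousOn_piMat.congr fun A hA => ?_
  show projOf (fGr A).1 = piMat A
  rw [fGr_of_unit hA]
  exact projOf_spanA hA

/-- The space `𝕐 = {P ∈ G(3, ℝ⁶) : P ∩ J(P) = {0}}` of totally real 3-planes is
path-connected. -/
theorem stmt_7 :
    IsPathConnected {P : Gr3 | P.1 ⊓ P.1.map J = ⊥} := by
  rw [← image_fGr]
  exact isPathConnected_units.image' continuousOn_fGr
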